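/- Let B = (B_{ij})_{i,j=1}^l be an l^2 x l^2 positive semidefinite matrix with l x l blocks satisfying B_{ii} = I_l for all i, B_{ij} skew-symmetric and B_{ji} = -B_{ij} for i != j. If rank(B) = l, then the blocks satisfy B_{1i} B_{1j} + B_{1j} B_{1i} = -2 delta_{ij} I_l for all 2 <= i, j <= l; in particular {B_{12},...,B_{1l}} define a representation of the Clifford algebra C_{l-1} on R^l. -/

import Mathlib

open Matrix

/-- Let `B = (B_{ij})` be an `l² × l²` positive semidefinite matrix with `l × l` blocks
satisfying `B_{ii} = I_l`, `B_{ij}` skew-symmetric and `B_{ji} = -B_{ij}` for `i ≠ j`.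
If `rank B = l`, then `B_{1i} B_{1j} + B_{1j} B_{1i} = -2 δ_{ij} I_l` for all
`i, j ≥ 2`; in particular `{B_{12},…,B_{1l}}` define a representation of the Clifford
algebra `C_{l-1}` on `ℝ^l`. -/
theorem clifford_relations_of_rank_eq_l (l : ℕ) (hl : 0 < l)
    (Bblk : Fin l → Fin l → Matrix (Fin l) (Fin l) ℝ)
    (B : Matrix (Fin l × Fin l) (Fin l × Fin l) ℝ)
    (hB : B = Matrix.of fun p q => Bblk p.1 q.1 p.2 q.2)
    (hpsd : B.PosSemidef)
    (hdiag : ∀ i, Bblk i i = 1)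
    (hskew : ∀ i j : Fin l, i ≠ j → (Bblk i j)ᵀ = -Bblk i j)
    (hanti : ∀ i j : Fin l, i ≠ j → Bblk j i = -Bblk i j)
    (hrank : B.rank = l) :
    ∀ i j : Fin l, i ≠ ⟨0, hl⟩ → j ≠ ⟨0, hl⟩ →
      Bblk ⟨0, hl⟩ i * Bblk ⟨0, hl⟩ j + Bblk ⟨0, hl⟩ j * Bblk ⟨0, hl⟩ i =
        if i = j then (-2 : ℝ) • (1 : Matrix (Fin l) (Fin l) ℝ) else 0 := by
  set e0 : Fin l := ⟨0, hl⟩ with he0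
  -- columns of the first block column
  set v : Fin l → (Fin l × Fin l → ℝ) :=
    fun a => B.mulVec (Pi.single (e0, a) 1) with hv
  -- projection onto the first block of entries
  set π : (Fin l × Fin l → ℝ) →ₗ[ℝ] (Fin l → ℝ) :=
    LinearMap.funLeft ℝ ℝ (fun b => (e0, b)) with hπ
  have hBval : ∀ p q : Fin l × Fin l, B p q = Bblk p.1 q.1 p.2 q.2 := by
    intro p q; rw [hB]; rfl
  have hcomp : (⇑π ∘ v) = fun a => Pi.single a (1 : ℝ) := by
    funext a b
    simp only [Function.comp, hv, hπ, LinearMap.funLeft_apply, mulVec_single_one, Matrix.col_apply]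
    rw [hBval (e0, b) (e0, a)]
    simp [hdiag e0, Matrix.one_apply, Pi.single_apply, eq_comm]
  have hindep : LinearIndependent ℝ v := by
    apply LinearIndependent.of_comp π
    rw [hcomp]
    have h := (Pi.basisFun ℝ (Fin l)).linearIndependent
    rwa [show ⇑(Pi.basisFun ℝ (Fin l)) = fun a => Pi.single a (1:ℝ) from
      funext fun a => Pi.basisFun_apply ℝ (Fin l) a] at h
  have hle : Submodule.span ℝ (Set.range v) ≤ LinearMap.range B.mulVecLin := by
    rw [Submodule.span_le]
    rintro _ ⟨a, rfl⟩
    exact ⟨Pi.single (e0, a) 1, rfl⟩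
  have hspan : Submodule.span ℝ (Set.range v) = LinearMap.range B.mulVecLin := by
    apply Submodule.eq_of_le_of_finrank_eq hle
    rw [finrank_span_eq_card hindep]
    have : B.rank = Module.finrank ℝ (LinearMap.range B.mulVecLin) := rfl
    rw [← this, hrank, Fintype.card_fin]
  -- key identity : Bblk i e0 * Bblk e0 j = Bblk i j
  have key : ∀ i j : Fin l, Bblk i e0 * Bblk e0 j = Bblk i j := by
    intro i j
    ext p b
    have hmem : B.mulVec (Pi.single (j, b) 1) ∈ Submodule.span ℝ (Set.range v) := by
      rw [hspan]; exact ⟨Pi.single (j, b) 1, rfl⟩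
    rw [Submodule.mem_span_range_iff_exists_fun] at hmem
    obtain ⟨c, hc⟩ := hmem
    have hc' : ∀ p : Fin l × Fin l, ∑ a, c a * B p (e0, a) = B p (j, b) := by
      intro p
      have := congrFun hc p
      simpa [hv, mulVec_single, Finset.sum_apply] using this
    have hca : ∀ a', c a' = Bblk e0 j a' b := by
      intro a'
      have := hc' (e0, a')
      simp only [hBval] at this
      calc c a' = ∑ a, c a * Bblk e0 e0 a' a := by
            rw [hdiag e0]
            simp [Matrix.one_apply, mul_ite]
        _ = Bblk e0 j a' b := this
    have := hc' (i, p)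
    simp only [hBval] at this
    rw [Matrix.mul_apply]
    calc ∑ a, Bblk i e0 p a * Bblk e0 j a b
        = ∑ a, c a * Bblk i e0 p a := by
          refine Finset.sum_congr rfl fun a _ => ?_
          rw [hca a, mul_comm]
      _ = Bblk i j p b := this
  intro i j hi hj
  by_cases hij : i = j
  · subst hij
    simp only [if_pos rfl]
    have h1 : Bblk i e0 * Bblk e0 i = 1 := by rw [key i i, hdiag i]
    have h2 : Bblk i e0 = -Bblk e0 i := hanti e0 i (Ne.symm hi)
    rw [h2, neg_mul, neg_eq_iff_eq_neg] at h1
    rw [h1]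
    ext p q
    simp [Matrix.one_apply]
    split_ifs <;> norm_num
  · simp only [if_neg hij]
    have h1 : Bblk i e0 * Bblk e0 j = Bblk i j := key i j
    have h2 : Bblk j e0 * Bblk e0 i = Bblk j i := key j i
    rw [hanti e0 i (Ne.symm hi), neg_mul] at h1
    rw [hanti e0 j (Ne.symm hj), neg_mul] at h2
    rw [hanti i j hij] at h2
    have := congrArg₂ (· + ·) h1 h2
    simp only [neg_add_eq_iff_eq_add] at this
    linear_combination (norm := abel) -h1 - h2
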